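/- Let T > 0, M > 0, and let u : [0,T] × ℝ² → ℝ² satisfy |u(t,x) − u(t,y)| ≤ M·|x−y|·(−log |x−y|) for all t ∈ [0,T] and all x, y ∈ ℝ² with 0 < |x−y| ≤ 1/2. Let X, Y : [0,T] → ℝ² be differentiable with X′(t) = u(t, X(t)) and Y′(t) = u(t, Y(t)) for all t ∈ [0,T], suppose 0 < |X(0) − Y(0)|, and suppose |X(t) − Y(t)| ≤ 1/2 for all t ∈ [0,T]. Then for every t ∈ [0,T] one has |X(0) − Y(0)|^{exp(Mt)} ≤ |X(t) − Y(t)| ≤ |X(0) − Y(0)|^{exp(−Mt)}. -/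

import Mathlib

open Real Set Filter Topology

/-- Lemma 2.2 (Yudovich flow-map estimate): trajectories of a log-Lipschitz velocity field
separate at Hölder rates `|X(0)−Y(0)|^{exp(±Mt)}`. -/
theorem yudovich_flow_estimate (T M : ℝ) (hT : 0 < T) (hM : 0 < M)
    (u : ℝ → EuclideanSpace ℝ (Fin 2) → EuclideanSpace ℝ (Fin 2))
    (hu : ∀ t ∈ Set.Icc (0:ℝ) T, ∀ x y : EuclideanSpace ℝ (Fin 2),
        0 < ‖x - y‖ → ‖x - y‖ ≤ 1/2 →
        ‖u t x - u t y‖ ≤ M * ‖x - y‖ * (-Real.log ‖x - y‖))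
    (X Y : ℝ → EuclideanSpace ℝ (Fin 2))
    (hX : ∀ t ∈ Set.Icc (0:ℝ) T, HasDerivAt X (u t (X t)) t)
    (hY : ∀ t ∈ Set.Icc (0:ℝ) T, HasDerivAt Y (u t (Y t)) t)
    (h0 : 0 < ‖X 0 - Y 0‖)
    (hsep : ∀ t ∈ Set.Icc (0:ℝ) T, ‖X t - Y t‖ ≤ 1/2) :
    ∀ t ∈ Set.Icc (0:ℝ) T,
      ‖X 0 - Y 0‖ ^ Real.exp (M * t) ≤ ‖X t - Y t‖ ∧
      ‖X t - Y t‖ ≤ ‖X 0 - Y 0‖ ^ Real.exp (-(M * t)) := by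
  classical
  set Z : ℝ → EuclideanSpace ℝ (Fin 2) := fun s => X s - Y s with hZdef
  have hZd : ∀ s ∈ Icc (0:ℝ) T, HasDerivAt Z (u s (X s) - u s (Y s)) s :=
    fun s hs => (hX s hs).sub (hY s hs)
  set h : ℝ → ℝ := fun s => (inner ℝ (Z s) (Z s) : ℝ) with hhdef
  have hheq : ∀ s, h s = ‖Z s‖ ^ 2 := fun s => real_inner_self_eq_norm_sq _
  set D : ℝ → ℝ := fun s => 2 * (inner ℝ (Z s) (u s (X s) - u s (Y s)) : ℝ) with hDdef
  set ψ : ℝ → ℝ := fun s => Real.log (-(Real.log (h s))) with hψdef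
  -- derivative of h
  have hDh : ∀ s ∈ Icc (0:ℝ) T, HasDerivAt h (D s) s := by
    intro s hs
    have hI := (hZd s hs).inner ℝ (hZd s hs)
    have hcomm : (inner ℝ (u s (X s) - u s (Y s)) (Z s) : ℝ)
        = inner ℝ (Z s) (u s (X s) - u s (Y s)) := real_inner_comm _ _
    refine hI.congr_deriv ?_
    rw [hcomm]; ring
  -- basic positivity facts
  have hsep' : ∀ s ∈ Icc (0:ℝ) T, ‖Z s‖ ≤ 1/2 := fun s hs => hsep s hs
  have basic : ∀ s ∈ Icc (0:ℝ) T, 0 < ‖Z s‖ →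
      0 < h s ∧ Real.log (h s) < 0 ∧ 0 < -Real.log ‖Z s‖ := by
    intro s hs hg
    have hle := hsep' s hs
    have h1 : h s = ‖Z s‖ ^ 2 := hheq s
    have hpos : 0 < h s := by rw [h1]; positivity
    have hlt1 : h s < 1 := by nlinarith
    exact ⟨hpos, Real.log_neg hpos hlt1,
      neg_pos.mpr (Real.log_neg hg (by linarith))⟩
  -- derivative of ψ and its bound, wherever ‖Z s‖ > 0
  have hψd : ∀ s ∈ Icc (0:ℝ) T, 0 < ‖Z s‖ →
      HasDerivAt ψ ((-(D s / h s)) / (-(Real.log (h s)))) s ∧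
      ‖(-(D s / h s)) / (-(Real.log (h s)))‖ ≤ M := by
    intro s hs hg
    obtain ⟨hpos, hlneg, hLpos⟩ := basic s hs hg
    have hne : h s ≠ 0 := hpos.ne'
    have hnl : 0 < -Real.log (h s) := neg_pos.mpr hlneg
    have hderiv : HasDerivAt ψ ((-(D s / h s)) / (-(Real.log (h s)))) s :=
      (((hDh s hs).log hne).neg).log hnl.ne'
    refine ⟨hderiv, ?_⟩
    -- bound on |D s|
    have hZ'le : ‖u s (X s) - u s (Y s)‖ ≤ M * ‖Z s‖ * (-Real.log ‖Z s‖) :=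
      hu s hs (X s) (Y s) hg (hsep' s hs)
    have hinner : |(inner ℝ (Z s) (u s (X s) - u s (Y s)) : ℝ)|
        ≤ ‖Z s‖ * ‖u s (X s) - u s (Y s)‖ := abs_real_inner_le_norm _ _
    have hlg : Real.log (h s) = 2 * Real.log ‖Z s‖ := by
      rw [hheq s, Real.log_pow]; push_cast; ring
    have hD : |D s| ≤ M * (h s * (-Real.log (h s))) := by
      have h2 := mul_le_mul_of_nonneg_left hZ'le hg.le
      have h3 : |D s| ≤ 2 * (‖Z s‖ * ‖u s (X s) - u s (Y s)‖) := by
        calc |D s| = 2 * |(inner ℝ (Z s) (u s (X s) - u s (Y s)) : ℝ)| := by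
              rw [hDdef]; rw [abs_mul, abs_two]
          _ ≤ 2 * (‖Z s‖ * ‖u s (X s) - u s (Y s)‖) := by linarith
      have h4 : h s = ‖Z s‖ ^ 2 := hheq s
      rw [hlg, h4]
      nlinarith [h3, h2]
    rw [Real.norm_eq_abs, abs_div, abs_neg, abs_neg, abs_div,
      abs_of_pos hpos, abs_of_neg hlneg, div_div,
      div_le_iff₀ (mul_pos hpos hnl)]
    exact hD
  -- mean value inequality for ψ on [0, b]
  have key : ∀ b ∈ Icc (0:ℝ) T, (∀ r ∈ Icc (0:ℝ) b, 0 < ‖Z r‖) →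
      |ψ b - ψ 0| ≤ M * b := by
    intro b hb hpos
    have hsub : Icc (0:ℝ) b ⊆ Icc 0 T := Icc_subset_Icc le_rfl hb.2
    have hmvt := Convex.norm_image_sub_le_of_norm_hasDerivWithin_le
      (f := ψ) (f' := fun s => (-(D s / h s)) / (-(Real.log (h s)))) (C := M)
      (fun s hs => ((hψd s (hsub hs) (hpos s hs)).1).hasDerivWithinAt)
      (fun s hs => (hψd s (hsub hs) (hpos s hs)).2)
      (convex_Icc (0:ℝ) b) (left_mem_Icc.mpr hb.1) (right_mem_Icc.mpr hb.1)
    rw [Real.norm_eq_abs, Real.norm_eq_abs, sub_zero, abs_of_nonneg hb.1] at hmvt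
    exact hmvt
  -- a uniform lower bound for h on intervals of positivity
  set ε : ℝ := Real.exp (-(Real.exp (ψ 0 + M * T))) with hεdef
  have hεpos : 0 < ε := Real.exp_pos _
  have A : ∀ b ∈ Icc (0:ℝ) T, (∀ r ∈ Icc (0:ℝ) b, 0 < ‖Z r‖) → ε ≤ h b := by
    intro b hb hpos
    have hk := (abs_le.mp (key b hb hpos)).2
    have hψb : ψ b ≤ ψ 0 + M * T := by nlinarith [hb.1, hb.2, hM.le]
    obtain ⟨hhb, hlnegb, -⟩ := basic b hb (hpos b (right_mem_Icc.mpr hb.1))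
    have hnl : 0 < -Real.log (h b) := neg_pos.mpr hlnegb
    have hexp : -Real.log (h b) ≤ Real.exp (ψ 0 + M * T) := by
      calc -Real.log (h b) = Real.exp (ψ b) := (Real.exp_log hnl).symm
        _ ≤ _ := Real.exp_le_exp.mpr hψb
    calc ε ≤ Real.exp (Real.log (h b)) := Real.exp_le_exp.mpr (by linarith)
      _ = h b := Real.exp_log hhb
  -- continuity of h at points of [0,T]
  have hcont : ∀ s ∈ Icc (0:ℝ) T, ContinuousAt h s := by
    intro s hs
    have hc : ContinuousAt Z s := (hZd s hs).continuousAt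
    exact (hc.inner hc : ContinuousAt (fun r => (inner ℝ (Z r) (Z r) : ℝ)) s)
  -- positivity bootstrap
  have hpos0 : 0 < h 0 := by
    rw [hheq]; have : 0 < ‖Z 0‖ := h0; positivity
  set S : Set ℝ := {t | t ∈ Icc (0:ℝ) T ∧ ∀ r ∈ Icc (0:ℝ) t, 0 < h r} with hSdef
  have h0S : (0:ℝ) ∈ S := by
    refine ⟨⟨le_refl _, hT.le⟩, fun r hr => ?_⟩
    have : r = 0 := le_antisymm hr.2 hr.1
    rw [this]; exact hpos0
  have hSne : S.Nonempty := ⟨0, h0S⟩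
  have hSbdd : BddAbove S := ⟨T, fun x hx => hx.1.2⟩
  set c : ℝ := sSup S with hcdef
  have hc0 : 0 ≤ c := le_csSup hSbdd h0S
  have hcT : c ≤ T := csSup_le hSne fun x hx => hx.1.2
  have hposlt : ∀ r, 0 ≤ r → r < c → 0 < h r := by
    intro r hr0 hrc
    obtain ⟨t', ht'S, hrt'⟩ := exists_lt_of_lt_csSup hSne hrc
    exact ht'S.2 r ⟨hr0, hrt'.le⟩
  have hZpos_of_h : ∀ r, 0 < h r → 0 < ‖Z r‖ := by
    intro r hr
    by_contra hcon
    push_neg at hcon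
    have : ‖Z r‖ = 0 := le_antisymm hcon (norm_nonneg _)
    rw [hheq, this] at hr; simp at hr
  have hεlt : ∀ r, 0 ≤ r → r < c → ε ≤ h r := by
    intro r hr0 hrc
    exact A r ⟨hr0, (hrc.le.trans hcT)⟩
      (fun s hs => hZpos_of_h s (hposlt s hs.1 (lt_of_le_of_lt hs.2 hrc)))
  have hhc : 0 < h c := by
    rcases eq_or_lt_of_le hc0 with h' | h'
    · rw [← h']; exact hpos0
    · have hC := (hcont c ⟨hc0, hcT⟩).continuousWithinAt (s := Ico 0 c)
      have hne : (𝓝[Ico (0:ℝ) c] c).NeBot := by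
        rw [← mem_closure_iff_nhdsWithin_neBot, closure_Ico h'.ne]
        exact ⟨hc0, le_refl c⟩
      have hev : ∀ᶠ r in 𝓝[Ico (0:ℝ) c] c, ε ≤ h r :=
        eventually_nhdsWithin_of_forall fun r hr => hεlt r hr.1 hr.2
      exact lt_of_lt_of_le hεpos (ge_of_tendsto hC hev)
  have hcS : c ∈ S := by
    refine ⟨⟨hc0, hcT⟩, fun r hr => ?_⟩
    rcases eq_or_lt_of_le hr.2 with h' | h'
    · rw [h']; exact hhc
    · exact hposlt r hr.1 h'
  have hcT' : c = T := by
    by_contra hne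
    have hclt : c < T := lt_of_le_of_ne hcT hne
    have hev : ∀ᶠ r in 𝓝 c, h r ∈ Ioi (0:ℝ) :=
      (hcont c ⟨hc0, hcT⟩).eventually_mem (Ioi_mem_nhds hhc)
    rw [Metric.eventually_nhds_iff] at hev
    obtain ⟨δ, hδ, hball⟩ := hev
    set t' : ℝ := min (c + δ/2) T with ht'def
    have hct' : c < t' := lt_min (by linarith) hclt
    have ht'S : t' ∈ S := by
      refine ⟨⟨hc0.trans hct'.le, min_le_right _ _⟩, fun r hr => ?_⟩
      rcases le_or_gt r c with h' | h'
      · exact hcS.2 r ⟨hr.1, h'⟩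
      · apply hball
        have h1 : r ≤ c + δ/2 := hr.2.trans (min_le_left _ _)
        rw [Real.dist_eq, abs_of_pos (by linarith)]
        linarith
    exact absurd (le_csSup hSbdd ht'S) (not_le.mpr hct')
  have hallpos : ∀ r ∈ Icc (0:ℝ) T, 0 < ‖Z r‖ := by
    intro r hr
    exact hZpos_of_h r (hcS.2 r ⟨hr.1, hr.2.trans_eq hcT'.symm⟩)
  -- final unraveling
  intro t ht
  have hkey := key t ht (fun r hr => hallpos r ⟨hr.1, hr.2.trans ht.2⟩)
  have h0T : (0:ℝ) ∈ Icc (0:ℝ) T := ⟨le_refl _, hT.le⟩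
  have hg0 : 0 < ‖Z 0‖ := h0
  have hgt : 0 < ‖Z t‖ := hallpos t ht
  obtain ⟨-, -, hL0⟩ := basic 0 h0T hg0
  obtain ⟨-, -, hLt⟩ := basic t ht hgt
  -- express ψ via ‖Z‖
  have hψ_eq : ∀ s ∈ Icc (0:ℝ) T, 0 < ‖Z s‖ →
      ψ s = Real.log 2 + Real.log (-Real.log ‖Z s‖) := by
    intro s hs hg
    obtain ⟨-, -, hLs⟩ := basic s hs hg
    have hlg : Real.log (h s) = 2 * Real.log ‖Z s‖ := by
      rw [hheq s, Real.log_pow]; push_cast; ring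
    show Real.log (-(Real.log (h s))) = _
    rw [hlg]
    rw [show -(2 * Real.log ‖Z s‖) = 2 * (-Real.log ‖Z s‖) by ring]
    rw [Real.log_mul two_ne_zero hLs.ne']
  rw [hψ_eq t ht hgt, hψ_eq 0 h0T hg0] at hkey
  have hkey' : |Real.log (-Real.log ‖Z t‖) - Real.log (-Real.log ‖Z 0‖)| ≤ M * t := by
    convert hkey using 2; ring
  obtain ⟨hk1, hk2⟩ := abs_le.mp hkey'
  -- upper bound on L t
  have hup : -Real.log ‖Z t‖ ≤ (-Real.log ‖Z 0‖) * Real.exp (M * t) := by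
    calc -Real.log ‖Z t‖ = Real.exp (Real.log (-Real.log ‖Z t‖)) := (Real.exp_log hLt).symm
      _ ≤ Real.exp (Real.log (-Real.log ‖Z 0‖) + M * t) := Real.exp_le_exp.mpr (by linarith)
      _ = (-Real.log ‖Z 0‖) * Real.exp (M * t) := by
          rw [Real.exp_add, Real.exp_log hL0]
  have hlo : (-Real.log ‖Z 0‖) * Real.exp (-(M * t)) ≤ -Real.log ‖Z t‖ := by
    calc (-Real.log ‖Z 0‖) * Real.exp (-(M * t))
        = Real.exp (Real.log (-Real.log ‖Z 0‖) + -(M * t)) := by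
          rw [Real.exp_add, Real.exp_log hL0]
      _ ≤ Real.exp (Real.log (-Real.log ‖Z t‖)) := Real.exp_le_exp.mpr (by linarith)
      _ = -Real.log ‖Z t‖ := Real.exp_log hLt
  constructor
  · show ‖Z 0‖ ^ Real.exp (M * t) ≤ ‖Z t‖
    rw [Real.rpow_def_of_pos hg0]
    calc Real.exp (Real.log ‖Z 0‖ * Real.exp (M * t))
        ≤ Real.exp (Real.log ‖Z t‖) := Real.exp_le_exp.mpr (by nlinarith)
      _ = ‖Z t‖ := Real.exp_log hgt
  · show ‖Z t‖ ≤ ‖Z 0‖ ^ Real.exp (-(M * t))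
    rw [Real.rpow_def_of_pos hg0]
    calc ‖Z t‖ = Real.exp (Real.log ‖Z t‖) := (Real.exp_log hgt).symm
      _ ≤ Real.exp (Real.log ‖Z 0‖ * Real.exp (-(M * t))) :=
          Real.exp_le_exp.mpr (by nlinarith)
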